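/- Any finite word of length n contains at most n+1 distinct palindromic factors (including the empty word). -/

import Mathlib

theorem palindromic_factors_le_length_succ {A : Type*} (u : List A) :
    {v : List A | v <:+: u ∧ v.reverse = v}.ncard ≤ u.length + 1 := by
  induction u using List.reverseRecOn with
  | nil =>
    have h : {v : List A | v <:+: ([] : List A) ∧ v.reverse = v} = {[]} := by
      ext v
      simp only [Set.mem_setOf_eq, Set.mem_singleton_iff]
      constructor
      · rintro ⟨h1, -⟩; exact List.eq_nil_of_infix_nil h1
      · rintro rfl; simp
    rw [h]; simp
  | append_singleton w a ih =>
    have hfin : ∀ x : List A, {v : List A | v <:+: x ∧ v.reverse = v}.Finite := by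
      intro x
      apply Set.Finite.subset x.sublists.finite_toSet
      intro v hv
      simp only [Set.mem_setOf_eq, List.mem_sublists]
      exact hv.1.sublist
    set S : Set (List A) := {p | p <:+ w ++ [a] ∧ p.reverse = p} with hS
    have hSfin : S.Finite :=
      (hfin (w ++ [a])).subset (fun p hp => ⟨hp.1.isInfix, hp.2⟩)
    have hSne : S.Nonempty := ⟨[a], ⟨w, rfl⟩, rfl⟩
    obtain ⟨q, hqS, hqmax⟩ : ∃ q ∈ S, ∀ p ∈ S, q.length ≤ p.length → q.length = p.length := by
      obtain ⟨q, hqS, hq⟩ := hSfin.exists_maximalFor List.length S hSne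
      exact ⟨q, hqS, fun p hp h => le_antisymm h (hq hp h)⟩
    have key : {v : List A | v <:+: w ++ [a] ∧ v.reverse = v}
        ⊆ insert q {v : List A | v <:+: w ∧ v.reverse = v} := by
      rintro p ⟨hinf, hpal⟩
      obtain ⟨s, t, hst⟩ := hinf
      rcases List.eq_nil_or_concat t with rfl | ⟨t', b, rfl⟩
      · -- p is a suffix of w ++ [a]
        rw [List.append_nil] at hst
        have hpS : p ∈ S := ⟨⟨s, hst⟩, hpal⟩
        by_cases hpq : p = q
        · exact Set.mem_insert_iff.2 (Or.inl hpq)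
        · right
          have hlen : p.length < q.length := by
            rcases lt_or_ge p.length q.length with h | h
            · exact h
            · have heq := hqmax p hpS h
              have : q <:+ p := List.suffix_of_suffix_length_le hqS.1 hpS.1 h
              exact absurd (this.sublist.eq_of_length heq).symm hpq
          -- p is a suffix of q
          have hpq' : p <:+ q := List.suffix_of_suffix_length_le hpS.1 hqS.1 hlen.le
          -- since q is a palindrome, p is a prefix of q
          have hpref : p <+: q := by
            rw [← List.reverse_prefix, hpal, hqS.2] at hpq'
            exact hpq'
          obtain ⟨t, ht⟩ := hpref
          obtain ⟨r, hr⟩ := hqS.1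
          have htne : t ≠ [] := by
            intro h
            rw [h, List.append_nil] at ht
            exact hpq ht
          obtain ⟨t', b, rfl⟩ := List.eq_nil_or_concat t |>.resolve_left htne
          rw [← ht] at hr
          have hr' : (r ++ p ++ t') ++ [b] = w ++ [a] := by
            simpa [List.concat_eq_append, List.append_assoc] using hr
          have : r ++ p ++ t' = w := by
            apply List.append_inj_left' hr'
            simp
          exact ⟨⟨r, t', this⟩, hpal⟩
      · -- p is an infix of w
        right
        have hst' : (s ++ p ++ t') ++ [b] = w ++ [a] := by
          simpa [List.concat_eq_append, List.append_assoc] using hst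
        have : s ++ p ++ t' = w := by
          apply List.append_inj_left' hst'
          simp
        exact ⟨⟨s, t', this⟩, hpal⟩
    calc {v : List A | v <:+: w ++ [a] ∧ v.reverse = v}.ncard
        ≤ (insert q {v : List A | v <:+: w ∧ v.reverse = v}).ncard :=
          Set.ncard_le_ncard key ((hfin w).insert q)
      _ ≤ {v : List A | v <:+: w ∧ v.reverse = v}.ncard + 1 :=
          Set.ncard_insert_le q _
      _ ≤ w.length + 1 + 1 := by omega
      _ = (w ++ [a]).length + 1 := by simp
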